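/- arXiv:2507.16776 — 3 statements merged into one kernel-verified Lean document; each statement's English description precedes it below -/
import Mathlib

section
/- Let α ∈ (0,1) and suppose the data are n i.i.d. observations from a Bernoulli distribution with unknown parameter p ∈ (0,1). There exists no method of constructing confidence sets CS(1-α, n) for p that is simultaneously non-asymptotically valid (for all n and all p ∈ (0,1), the probability that CS contains p is at least 1-α) and asymptotically exact uniformly over p ∈ (0,1) (the supremum over p of |P_p(CS ∋ p) - (1-α)| tends to 0 as n → ∞). -/
open MeasureTheory

noncomputable def bern (p : ℝ) : Measure Bool :=
  ENNReal.ofReal p • Measure.dirac true + ENNReal.ofReal (1 - p) • Measure.dirac false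

noncomputable def bernCoverage (n : ℕ) (p : ℝ) (C : (Fin n → Bool) → Set ℝ) : ℝ :=
  ((Measure.pi fun _ : Fin n => bern p) {ω | p ∈ C ω}).toReal

lemma bern_prob {p : ℝ} (h0 : 0 ≤ p) (h1 : p ≤ 1) : IsProbabilityMeasure (bern p) := by
  constructor
  simp [bern, Measure.dirac_apply, ← ENNReal.ofReal_add h0 (by linarith : (0:ℝ) ≤ 1 - p)]

lemma pi_false (n : ℕ) {p : ℝ} (h0 : 0 ≤ p) (h1 : p ≤ 1) :
    (Measure.pi fun _ : Fin n => bern p) {fun _ => false} = (ENNReal.ofReal (1 - p)) ^ n := by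
  haveI := bern_prob h0 h1
  have h : ({fun _ => false} : Set (Fin n → Bool)) = Set.pi Set.univ (fun _ : Fin n => ({false} : Set Bool)) := by
    ext ω; simp [funext_iff, Set.mem_pi]
  rw [h, Measure.pi_pi]
  simp [bern, Measure.dirac_apply]

lemma coverage_ge (n : ℕ) {p : ℝ} (h0 : 0 ≤ p) (h1 : p ≤ 1)
    (C : (Fin n → Bool) → Set ℝ) (h : p ∈ C (fun _ => false)) :
    (1 - p) ^ n ≤ bernCoverage n p C := by
  haveI := bern_prob h0 h1
  haveI : IsProbabilityMeasure (Measure.pi fun _ : Fin n => bern p) := inferInstance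
  have hsub : ({fun _ => false} : Set (Fin n → Bool)) ⊆ {ω | p ∈ C ω} := by
    intro ω hω; simp at hω; simp [hω, h]
  have := measure_mono (μ := Measure.pi fun _ : Fin n => bern p) hsub
  rw [pi_false n h0 h1] at this
  have htr := ENNReal.toReal_mono (measure_ne_top _ _) this
  rw [ENNReal.toReal_pow, ENNReal.toReal_ofReal (by linarith)] at htr
  exact htr

lemma coverage_le (n : ℕ) {p : ℝ} (h0 : 0 ≤ p) (h1 : p ≤ 1)
    (C : (Fin n → Bool) → Set ℝ) (h : p ∉ C (fun _ => false)) :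
    bernCoverage n p C ≤ 1 - (1 - p) ^ n := by
  haveI := bern_prob h0 h1
  haveI : IsProbabilityMeasure (Measure.pi fun _ : Fin n => bern p) := inferInstance
  have hsub : {ω : Fin n → Bool | p ∈ C ω} ⊆ ({fun _ => false} : Set (Fin n → Bool))ᶜ := by
    intro ω hω hmem
    simp at hmem
    exact h (hmem ▸ hω)
  have hm : MeasurableSet ({fun _ => false} : Set (Fin n → Bool)) :=
    (Set.toFinite _).measurableSet
  have hc : (Measure.pi fun _ : Fin n => bern p) ({fun _ => false} : Set (Fin n → Bool))ᶜ
      = 1 - (ENNReal.ofReal (1 - p)) ^ n := by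
    rw [measure_compl hm (measure_ne_top _ _), measure_univ, pi_false n h0 h1]
  have := measure_mono (μ := Measure.pi fun _ : Fin n => bern p) hsub
  rw [hc] at this
  have htr := ENNReal.toReal_mono (by simp : (1 : ENNReal) - (ENNReal.ofReal (1-p))^n ≠ ⊤) this
  rw [ENNReal.toReal_sub_of_le ?hle (by simp), ENNReal.toReal_pow, ENNReal.toReal_ofReal (by linarith)] at htr
  · exact htr
  case hle =>
    calc (ENNReal.ofReal (1-p))^n ≤ 1^n := by
          gcongr
          exact ENNReal.ofReal_le_one.mpr (by linarith)
      _ = 1 := one_pow n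

lemma coverage_nonneg (n : ℕ) (p : ℝ) (C : (Fin n → Bool) → Set ℝ) :
    0 ≤ bernCoverage n p C := ENNReal.toReal_nonneg

lemma coverage_le_one (n : ℕ) {p : ℝ} (h0 : 0 ≤ p) (h1 : p ≤ 1)
    (C : (Fin n → Bool) → Set ℝ) : bernCoverage n p C ≤ 1 := by
  haveI := bern_prob h0 h1
  haveI : IsProbabilityMeasure (Measure.pi fun _ : Fin n => bern p) := inferInstance
  exact ENNReal.toReal_le_of_le_ofReal zero_le_one (by simpa using prob_le_one)

/-- There is no confidence-set method for the Bernoulli parameter that is both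
non-asymptotically valid and asymptotically exact uniformly over `p ∈ (0,1)`. -/
theorem stmt_0 (α : ℝ) (hα : α ∈ Set.Ioo (0 : ℝ) 1) :
    ¬ ∃ CS : (n : ℕ) → (Fin n → Bool) → Set ℝ,
      (∀ n : ℕ, 1 ≤ n → ∀ p ∈ Set.Ioo (0 : ℝ) 1, 1 - α ≤ bernCoverage n p (CS n)) ∧
      Filter.Tendsto
        (fun n : ℕ => ⨆ p : Set.Ioo (0 : ℝ) 1, |bernCoverage n p (CS n) - (1 - α)|)
        Filter.atTop (nhds 0) := by
  obtain ⟨hα0, hα1⟩ := hα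
  rintro ⟨CS, hvalid, htend⟩
  -- the sup is eventually < α
  have hev : ∀ᶠ n in Filter.atTop,
      (⨆ p : Set.Ioo (0 : ℝ) 1, |bernCoverage n p (CS n) - (1 - α)|) < α :=
    htend.eventually_lt_const hα0
  obtain ⟨n, hsuplt, hn1⟩ := (hev.and (Filter.eventually_ge_atTop 1)).exists
  -- lower bound the sup by α
  have hbdd : BddAbove (Set.range fun p : Set.Ioo (0 : ℝ) 1 =>
      |bernCoverage n p (CS n) - (1 - α)|) := by
    refine ⟨1, ?_⟩
    rintro x ⟨⟨p, hp0, hp1⟩, rfl⟩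
    have h1 := coverage_le_one n hp0.le hp1.le (CS n)
    have h2 := coverage_nonneg n p (CS n)
    rw [abs_le]; constructor <;> simp <;> linarith
  have key : ∀ ε : ℝ, 0 < ε →
      α - ε ≤ ⨆ p : Set.Ioo (0 : ℝ) 1, |bernCoverage n p (CS n) - (1 - α)| := by
    intro ε hε
    set δ := min ε (1 - α) with hδdef
    have hδ0 : 0 < δ := lt_min hε (by linarith)
    have hδε : δ ≤ ε := min_le_left _ _
    have hδα : δ ≤ 1 - α := min_le_right _ _
    set p := δ / (2 * n) with hpdef
    have hn0 : (0:ℝ) < n := by exact_mod_cast hn1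
    have hn1' : (1:ℝ) ≤ n := by exact_mod_cast hn1
    have hp0 : 0 < p := div_pos hδ0 (by positivity)
    have hp1 : p < 1 := by
      have hle : p ≤ δ := by
        rw [hpdef, div_le_iff₀ (by positivity)]
        nlinarith [mul_nonneg hδ0.le (show (0:ℝ) ≤ 2*(n:ℝ)-1 by linarith)]
      linarith
    have hnp : (n : ℝ) * p < δ := by
      rw [hpdef]
      rw [mul_div_assoc']
      rw [div_lt_iff₀ (by positivity)]
      nlinarith
    -- Bernoulli inequality
    have hbern : 1 - (n : ℝ) * p ≤ (1 - p) ^ n := by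
      have := one_add_mul_le_pow (a := -p) (by linarith) n
      simpa [mul_comm, sub_eq_add_neg] using this
    have hpow : 1 - δ < (1 - p) ^ n := by linarith
    -- p must be in CS n (all-false)
    have hmem : p ∈ CS n (fun _ => false) := by
      by_contra hmem
      have hle := coverage_le n hp0.le hp1.le (CS n) hmem
      have hval := hvalid n hn1 p ⟨hp0, hp1⟩
      nlinarith
    have hge := coverage_ge n hp0.le hp1.le (CS n) hmem
    have : α - ε ≤ |bernCoverage n p (CS n) - (1 - α)| := by
      have : (1 - δ) - (1 - α) ≤ bernCoverage n p (CS n) - (1 - α) := by linarith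
      have habs : bernCoverage n p (CS n) - (1 - α) ≤ |bernCoverage n p (CS n) - (1 - α)| :=
        le_abs_self _
      linarith
    exact le_trans this (le_ciSup hbdd ⟨p, hp0, hp1⟩)
  have hsup : α ≤ ⨆ p : Set.Ioo (0 : ℝ) 1, |bernCoverage n p (CS n) - (1 - α)| := by
    refine le_of_forall_pos_le_add ?_
    intro ε hε
    linarith [key ε hε]
  linarith [hsuplt]
end

section
/- Suppose that for every α ∈ (0,1) there exists a sequence of confidence sets CS(1-α,n) that is asymptotically exact uniformly over Θ, i.e. f(α,n) := sup_{θ∈Θ} |P_θ(CS(1-α,n) ∋ T(θ)) - (1-α)| → 0 as n → ∞. Then for every α ∈ (0,1) there exists a sequence of confidence sets C̃S(1-α,n) that is simultaneously non-asymptotically valid over Θ at level 1-α (P_θ(C̃S ∋ T(θ)) ≥ 1-α for all n ≥ 1 and θ ∈ Θ) and asymptotically exact uniformly over Θ at level 1-α. -/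
open MeasureTheory

private lemma le_ciSup_of_bdd {ι : Sort*} (f : ι → ℝ) (B : ℝ) (hB : ∀ i, f i ≤ B) (i : ι) :
    f i ≤ ⨆ j, f j :=
  le_ciSup ⟨B, by rintro x ⟨j, rfl⟩; exact hB j⟩ i

/-- If for every level `1 - α` there is a confidence-set method that is asymptotically
exact uniformly over `Θ`, then for every level `1 - α` there is a confidence-set method
that is both non-asymptotically valid and asymptotically exact uniformly over `Θ`. -/
theorem stmt_2 {Θ : Type*} {Ω : ℕ → Type*} [∀ n, MeasurableSpace (Ω n)]
    (P : Θ → (n : ℕ) → Measure (Ω n)) (hP : ∀ θ n, IsProbabilityMeasure (P θ n))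
    (T : Θ → ℝ)
    (CS : ℝ → (n : ℕ) → Ω n → Set ℝ)
    (hexact : ∀ α ∈ Set.Ioo (0 : ℝ) 1,
      Filter.Tendsto
        (fun n => ⨆ θ : Θ, |((P θ n) {ω | T θ ∈ CS α n ω}).toReal - (1 - α)|)
        Filter.atTop (nhds 0)) :
    ∀ α ∈ Set.Ioo (0 : ℝ) 1,
      ∃ CS' : (n : ℕ) → Ω n → Set ℝ,
        (∀ n : ℕ, 1 ≤ n → ∀ θ : Θ,
          (1 - α : ℝ) ≤ ((P θ n) {ω | T θ ∈ CS' n ω}).toReal) ∧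
        Filter.Tendsto
          (fun n => ⨆ θ : Θ, |((P θ n) {ω | T θ ∈ CS' n ω}).toReal - (1 - α)|)
          Filter.atTop (nhds 0) := by
  classical
  intro α hα
  obtain ⟨hα0, hα1⟩ := hα
  -- the approximating levels
  set β : ℕ → ℝ := fun k => α * (1 - 1 / ((k : ℝ) + 2)) with hβdef
  have hc : ∀ k : ℕ, (0 : ℝ) < (k : ℝ) + 2 := fun k => by positivity
  have hβpos : ∀ k, 0 < β k := by
    intro k
    have h2 := hc k
    have h3 : (0 : ℝ) < 1 - 1 / ((k : ℝ) + 2) := by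
      rw [sub_pos, div_lt_one h2]; linarith
    exact mul_pos hα0 h3
  have hβlt : ∀ k, β k < α := by
    intro k
    have h2 := hc k
    have h3 : 1 - 1 / ((k : ℝ) + 2) < 1 := by
      have : 0 < 1 / ((k : ℝ) + 2) := by positivity
      linarith
    calc β k < α * 1 := by exact mul_lt_mul_of_pos_left h3 hα0
      _ = α := mul_one α
  have hβmem : ∀ k, β k ∈ Set.Ioo (0 : ℝ) 1 := fun k => ⟨hβpos k, lt_trans (hβlt k) hα1⟩
  have hid : ∀ k, α - β k = α / ((k : ℝ) + 2) := by
    intro k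
    have h2 := (hc k).ne'
    simp only [hβdef]
    field_simp
    ring
  have hεpos : ∀ k : ℕ, (0 : ℝ) < α / ((k : ℝ) + 2) := fun k => by positivity
  -- probability values lie in [0,1]
  have htr : ∀ (n : ℕ) (θ : Θ) (s : Set (Ω n)),
      0 ≤ ((P θ n) s).toReal ∧ ((P θ n) s).toReal ≤ 1 := by
    intro n θ s
    haveI := hP θ n
    refine ⟨ENNReal.toReal_nonneg, ?_⟩
    have h1 : (P θ n) s ≤ 1 := prob_le_one
    calc ((P θ n) s).toReal ≤ (1 : ENNReal).toReal := ENNReal.toReal_mono ENNReal.one_ne_top h1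
      _ = 1 := by simp
  -- choose the indices N k
  have hN : ∀ k : ℕ, ∃ N : ℕ, ∀ n ≥ N,
      (⨆ θ : Θ, |((P θ n) {ω | T θ ∈ CS (β k) n ω}).toReal - (1 - β k)|)
        < α / ((k : ℝ) + 2) := by
    intro k
    have h := (hexact (β k) (hβmem k)).eventually_lt_const (hεpos k)
    exact Filter.eventually_atTop.mp h
  choose N hNspec using hN
  -- the blocks
  set n' : ℕ → ℕ := fun k => Nat.rec (N 0) (fun k ih => max (ih + 1) (N (k + 1))) k with hn'def
  have hn'succ : ∀ k, n' (k + 1) = max (n' k + 1) (N (k + 1)) := fun k => rfl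
  have hn'0 : n' 0 = N 0 := rfl
  have hk_le : ∀ k, k ≤ n' k := by
    intro k
    induction k with
    | zero => exact Nat.zero_le _
    | succ k ih =>
      have : n' k + 1 ≤ n' (k + 1) := by rw [hn'succ]; exact le_max_left _ _
      omega
  have hNle : ∀ k, N k ≤ n' k := by
    intro k
    cases k with
    | zero => exact le_of_eq hn'0.symm
    | succ k => rw [hn'succ]; exact le_max_right _ _
  -- the chosen level index at sample size n
  set kn : ℕ → ℕ := fun n => Nat.findGreatest (fun k => n' k ≤ n) n with hkndef
  refine ⟨fun n ω => if n' 0 ≤ n then CS (β (kn n)) n ω else Set.univ, ?_, ?_⟩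
  · -- non-asymptotic validity
    intro n _ θ
    by_cases hn : n' 0 ≤ n
    · simp only [if_pos hn]
      set k := kn n with hk
      have hkle : n' k ≤ n := Nat.findGreatest_spec (P := fun k => n' k ≤ n) (Nat.zero_le n) hn
      have hNkn : N k ≤ n := le_trans (hNle k) hkle
      have hsup := hNspec k n hNkn
      have hle := le_ciSup_of_bdd
        (fun θ : Θ => |((P θ n) {ω | T θ ∈ CS (β k) n ω}).toReal - (1 - β k)|) 2
        (by
          intro θ'
          obtain ⟨h0, h1⟩ := htr n θ' {ω | T θ' ∈ CS (β k) n ω}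
          have hb0 := hβpos k
          have hb1 := hβlt k
          rw [abs_le]
          constructor <;> linarith) θ
      have habs : |((P θ n) {ω | T θ ∈ CS (β k) n ω}).toReal - (1 - β k)|
          < α / ((k : ℝ) + 2) := lt_of_le_of_lt hle hsup
      rw [abs_lt] at habs
      have hidk := hid k
      linarith [habs.1]
    · simp only [if_neg hn]
      have hset : {ω : Ω n | T θ ∈ (Set.univ : Set ℝ)} = Set.univ := by simp
      rw [hset]
      haveI := hP θ n
      rw [measure_univ]
      simp
      linarith
  · -- uniform asymptotic exactness
    rw [Metric.tendsto_atTop]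
    intro ε hε
    obtain ⟨K, hK⟩ := exists_nat_gt (2 * α / ε)
    have hKε : 2 * α / ((K : ℝ) + 2) < ε := by
      rw [div_lt_iff₀ (by positivity)]
      have h1 : 2 * α / ε < (K : ℝ) + 2 := by linarith
      rw [div_lt_iff₀ hε] at h1
      linarith
    refine ⟨max (n' 0) (n' K), fun n hn => ?_⟩
    have hn0 : n' 0 ≤ n := le_trans (le_max_left _ _) hn
    have hnK : n' K ≤ n := le_trans (le_max_right _ _) hn
    simp only [if_pos hn0]
    set k := kn n with hk
    have hkle : n' k ≤ n := Nat.findGreatest_spec (P := fun k => n' k ≤ n) (Nat.zero_le n) hn0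
    have hKk : K ≤ k := Nat.le_findGreatest (le_trans (hk_le K) hnK) hnK
    have hNkn : N k ≤ n := le_trans (hNle k) hkle
    have hsup := hNspec k n hNkn
    have hidk := hid k
    have hbound : (⨆ θ : Θ, |((P θ n) {ω | T θ ∈ CS (β k) n ω}).toReal - (1 - α)|)
        ≤ 2 * α / ((k : ℝ) + 2) := by
      apply Real.iSup_le
      · intro θ
        have hle := le_ciSup_of_bdd
          (fun θ : Θ => |((P θ n) {ω | T θ ∈ CS (β k) n ω}).toReal - (1 - β k)|) 2
          (by
            intro θ'
            obtain ⟨h0, h1⟩ := htr n θ' {ω | T θ' ∈ CS (β k) n ω}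
            have hb0 := hβpos k
            have hb1 := hβlt k
            rw [abs_le]
            constructor <;> linarith) θ
        have habs : |((P θ n) {ω | T θ ∈ CS (β k) n ω}).toReal - (1 - β k)|
            < α / ((k : ℝ) + 2) := lt_of_le_of_lt hle hsup
        rw [abs_lt] at habs
        have hsplit : 2 * α / ((k : ℝ) + 2) = α / ((k : ℝ) + 2) + α / ((k : ℝ) + 2) := by
          ring
        rw [abs_le]
        constructor <;> linarith [habs.1, habs.2]
      · positivity
    have hnn : 0 ≤ ⨆ θ : Θ, |((P θ n) {ω | T θ ∈ CS (β k) n ω}).toReal - (1 - α)| :=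
      Real.iSup_nonneg fun θ => abs_nonneg _
    rw [Real.dist_eq, sub_zero, abs_of_nonneg hnn]
    have hmono : 2 * α / ((k : ℝ) + 2) ≤ 2 * α / ((K : ℝ) + 2) := by
      apply div_le_div_of_nonneg_left (by positivity) (by positivity)
      have : (K : ℝ) ≤ (k : ℝ) := Nat.cast_le.mpr hKk
      linarith
    linarith
end

section
/- Let n ≥ 1, a > 1, and ξ_1, ..., ξ_n be i.i.d. real random variables with E[ξ] = 0, variance σ² > 0, and E[ξ⁴]/σ⁴ ≤ K. Let ξ̄_n be the sample mean and σ̂₀² := n^{-1}∑ξ_i². With Δ_B, Δ_E the Berry–Esseen and Edgeworth distances of √n ξ̄_n/σ to the standard normal (as usual), for every x > 0: P(√n |ξ̄_n| > σ̂₀ x) ≤ 2(Φ(-x/√a) + min(Δ_E, Δ_B)) + exp(-n(1-1/a)²/(2K)). -/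
open MeasureTheory ProbabilityTheory

/-- The standard normal density. -/
noncomputable def gpdf (t : ℝ) : ℝ := (Real.sqrt (2 * Real.pi))⁻¹ * Real.exp (-(t ^ 2) / 2)

/-- The standard normal c.d.f. `Φ`. -/
noncomputable def Phi (x : ℝ) : ℝ := ∫ t in Set.Iic x, gpdf t

section AuxGaussian

lemma gpdf_nonneg (t : ℝ) : 0 ≤ gpdf t := by
  unfold gpdf
  positivity

lemma gpdf_even (t : ℝ) : gpdf (-t) = gpdf t := by simp [gpdf]

lemma integrable_gpdf : Integrable gpdf := by
  have h := (integrable_exp_neg_mul_sq (show (0:ℝ) < 1/2 by norm_num)).const_mul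
    (Real.sqrt (2 * Real.pi))⁻¹
  refine h.congr (Filter.Eventually.of_forall fun t => ?_)
  unfold gpdf
  ring_nf

lemma integral_gpdf : ∫ t, gpdf t = 1 := by
  unfold gpdf
  rw [MeasureTheory.integral_const_mul]
  have : ∀ t : ℝ, Real.exp (-(t ^ 2) / 2) = Real.exp (-(1/2) * t ^ 2) := by
    intro t; ring_nf
  simp_rw [this, integral_gaussian]
  rw [show Real.pi / (1/2) = 2 * Real.pi by ring]
  rw [inv_mul_cancel₀]
  positivity

lemma Phi_nonneg (x : ℝ) : 0 ≤ Phi x :=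
  integral_nonneg fun t => gpdf_nonneg t

lemma Phi_le_one (x : ℝ) : Phi x ≤ 1 := by
  rw [← integral_gpdf]
  exact setIntegral_le_integral integrable_gpdf (Filter.Eventually.of_forall fun t => gpdf_nonneg t)

lemma Phi_neg (x : ℝ) : Phi (-x) = 1 - Phi x := by
  have h1 : Phi (-x) = ∫ t in Set.Ioi x, gpdf t := by
    rw [Phi,
      show (∫ t in Set.Iic (-x), gpdf t) = ∫ t in Set.Iic (-x), gpdf (-t) by simp_rw [gpdf_even],
      integral_comp_neg_Iic, neg_neg]
  have h2 : Phi x + ∫ t in Set.Ioi x, gpdf t = 1 := by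
    rw [Phi, intervalIntegral.integral_Iic_add_Ioi integrable_gpdf.integrableOn
      integrable_gpdf.integrableOn, integral_gpdf]
  linarith [h1, h2]

lemma sqrt_two_pi_inv_le_one : (Real.sqrt (2 * Real.pi))⁻¹ ≤ 1 := by
  rw [inv_le_one_iff₀]
  right
  rw [show (1:ℝ) = Real.sqrt 1 by simp]
  exact Real.sqrt_le_sqrt (by nlinarith [Real.pi_gt_three])

lemma abs_edgeworth_term_le (t : ℝ) : |(1 - t ^ 2) * gpdf t| ≤ 3 := by
  have hg : gpdf t ≤ 1 := by
    unfold gpdf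
    calc (Real.sqrt (2 * Real.pi))⁻¹ * Real.exp (-(t ^ 2) / 2)
        ≤ 1 * 1 := by
          apply mul_le_mul sqrt_two_pi_inv_le_one _ (Real.exp_nonneg _) zero_le_one
          rw [Real.exp_le_one_iff]
          have := sq_nonneg t
          linarith
      _ = 1 := by ring
  have hg0 : 0 ≤ gpdf t := by unfold gpdf; positivity
  have hsq : t ^ 2 * gpdf t ≤ 2 := by
    have h1 : t ^ 2 / 2 + 1 ≤ Real.exp (t ^ 2 / 2) := Real.add_one_le_exp _
    have h2 : Real.exp (-(t ^ 2) / 2) * Real.exp (t ^ 2 / 2) = 1 := by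
      rw [← Real.exp_add, show -(t ^ 2) / 2 + t ^ 2 / 2 = 0 by ring, Real.exp_zero]
    have hE := (Real.exp_pos (-(t ^ 2) / 2)).le
    have h3 : Real.exp (-(t ^ 2) / 2) * (t ^ 2 / 2 + 1) ≤ 1 := by
      calc Real.exp (-(t ^ 2) / 2) * (t ^ 2 / 2 + 1)
          ≤ Real.exp (-(t ^ 2) / 2) * Real.exp (t ^ 2 / 2) :=
            mul_le_mul_of_nonneg_left h1 hE
        _ = 1 := h2
    have key : t ^ 2 * Real.exp (-(t ^ 2) / 2) ≤ 2 := by nlinarith [sq_nonneg t]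
    unfold gpdf
    calc t ^ 2 * ((Real.sqrt (2 * Real.pi))⁻¹ * Real.exp (-(t ^ 2) / 2))
        = (Real.sqrt (2 * Real.pi))⁻¹ * (t ^ 2 * Real.exp (-(t ^ 2) / 2)) := by ring
      _ ≤ 1 * 2 := by
          apply mul_le_mul sqrt_two_pi_inv_le_one key (by positivity) zero_le_one
      _ = 2 := by ring
  calc |(1 - t ^ 2) * gpdf t| ≤ (1 + t ^ 2) * gpdf t := by
        rw [abs_mul, abs_of_nonneg hg0]
        exact mul_le_mul_of_nonneg_right (by rw [abs_le]; constructor <;> nlinarith [sq_nonneg t]) hg0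
    _ = gpdf t + t ^ 2 * gpdf t := by ring
    _ ≤ 1 + 2 := add_le_add hg hsq
    _ = 3 := by norm_num

lemma exp_neg_le_quadratic {u : ℝ} (hu : 0 ≤ u) :
    Real.exp (-u) ≤ 1 - u + u ^ 2 / 2 := by
  have h1 : 1 + u + u ^ 2 / 2 ≤ Real.exp u := by
    have h := Real.sum_le_exp_of_nonneg hu 3
    simp [Finset.sum_range_succ] at h
    nlinarith [h]
  have hpos : (0:ℝ) < 1 + u + u ^ 2 / 2 := by nlinarith
  rw [Real.exp_neg]
  calc (Real.exp u)⁻¹ ≤ (1 + u + u ^ 2 / 2)⁻¹ := by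
        apply inv_anti₀ hpos h1
    _ ≤ 1 - u + u ^ 2 / 2 := by
        rw [inv_le_iff_one_le_mul₀ hpos]
        nlinarith [sq_nonneg u, pow_le_pow_left₀ hu (le_refl u)]

end AuxGaussian

lemma alg_helper (a K σ : ℝ) (n : ℕ) (hK : K ≠ 0) (hσ : σ ≠ 0) (ha : a ≠ 0) :
    - -((1 - 1 / a) / (K * σ ^ 2)) * (↑n * σ ^ 2 / a)
      + ↑n * (-((1 - 1 / a) / (K * σ ^ 2)) * σ ^ 2
        + ((1 - 1 / a) / (K * σ ^ 2)) ^ 2 * K * σ ^ 4 / 2)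
    = -(↑n * (1 - 1 / a) ^ 2) / (2 * K) := by
  field_simp
  ring

lemma chernoff_lower {Ω : Type*} [MeasurableSpace Ω] (μ : Measure Ω) [IsProbabilityMeasure μ]
    (n : ℕ) (a K σ : ℝ) (ha : 1 < a) (hσpos : 0 < σ)
    (ξ : Fin n → Ω → ℝ) (ξ₀ : Ω → ℝ)
    (hmeas : ∀ i, Measurable (ξ i)) (hmeas₀ : Measurable ξ₀)
    (hindep : iIndepFun ξ μ)
    (hid : ∀ i, IdentDistrib (ξ i) ξ₀ μ μ)
    (hint4 : Integrable (fun ω => ξ₀ ω ^ 4) μ)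
    (hσ : σ ^ 2 = ∫ ω, ξ₀ ω ^ 2 ∂μ)
    (hkurt : (∫ ω, ξ₀ ω ^ 4 ∂μ) / σ ^ 4 ≤ K) :
    (μ {ω | ∑ i, ξ i ω ^ 2 ≤ n * σ ^ 2 / a}).toReal
      ≤ Real.exp (-(n * (1 - 1 / a) ^ 2) / (2 * K)) := by
  -- integrability of ξ₀^2
  have hint2 : Integrable (fun ω => ξ₀ ω ^ 2) μ := by
    refine Integrable.mono' ((integrable_const (1:ℝ)).add hint4)
      ((hmeas₀.pow_const 2).aestronglyMeasurable)
      (Filter.Eventually.of_forall fun ω => ?_)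
    simp only [Pi.add_apply, Real.norm_eq_abs]
    rw [abs_of_nonneg (sq_nonneg _)]
    nlinarith [sq_nonneg (ξ₀ ω ^ 2 - 1)]
  -- σ⁴ ≤ m₄
  obtain ⟨m4, hm4⟩ : ∃ m4 : ℝ, m4 = ∫ ω, ξ₀ ω ^ 4 ∂μ := ⟨_, rfl⟩
  rw [← hm4] at hkurt
  have hm4σ : σ ^ 4 ≤ m4 := by
    have hpt : ∀ ω, 2 * σ ^ 2 * ξ₀ ω ^ 2 - σ ^ 4 ≤ ξ₀ ω ^ 4 := by
      intro ω; nlinarith [sq_nonneg (ξ₀ ω ^ 2 - σ ^ 2)]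
    have hintL2 : Integrable (fun ω => 2 * σ ^ 2 * ξ₀ ω ^ 2 - σ ^ 4) μ := by
      exact (hint2.const_mul (2 * σ ^ 2)).sub (integrable_const (σ ^ 4))
    have hle := integral_mono hintL2 hint4 hpt
    rw [integral_sub (hint2.const_mul _) (integrable_const _), integral_const_mul,
      integral_const] at hle
    simp only [measure_univ, probReal_univ, ENNReal.toReal_one, smul_eq_mul, one_mul, mul_one] at hle
    nlinarith [hσ]
  have hσ4pos : (0:ℝ) < σ ^ 4 := by positivity
  have hK1 : 1 ≤ K := le_trans (by rw [le_div_iff₀ hσ4pos]; linarith) hkurt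
  have hKpos : (0:ℝ) < K := lt_of_lt_of_le one_pos hK1
  -- the tilt parameter
  obtain ⟨t, hts⟩ : ∃ t : ℝ, t = (1 - 1 / a) / (K * σ ^ 2) := ⟨_, rfl⟩
  have h1a : 0 < 1 - 1 / a := by
    have : 1 / a < 1 := by rw [div_lt_one (lt_trans one_pos ha)]; exact ha
    linarith
  have htpos : 0 < t := by
    rw [hts]
    exact div_pos h1a (by positivity)
  -- the squared variables
  obtain ⟨Y, hY⟩ : ∃ Y : Fin n → Ω → ℝ, Y = fun i ω => ξ i ω ^ 2 := ⟨_, rfl⟩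
  have hYmeas : ∀ i, Measurable (Y i) := fun i => hY ▸ (hmeas i).pow_const 2
  have hYindep : iIndepFun Y μ := by
    rw [hY]
    exact hindep.comp (fun _ x => x ^ 2) (fun _ => measurable_id.pow_const 2)
  -- integrability of exp(-t * X) for X := ∑ Y i
  have hXapp : ∀ ω, (∑ i, Y i) ω = ∑ i, Y i ω := fun ω => by simp
  have hXmeas : Measurable (∑ i, Y i) := by
    rw [show (∑ i, Y i) = fun ω => ∑ i, Y i ω from funext hXapp]
    exact Finset.measurable_sum _ fun i _ => hYmeas i
  have hXnonneg : ∀ ω, 0 ≤ (∑ i, Y i) ω := by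
    intro ω
    rw [hXapp]
    refine Finset.sum_nonneg fun i _ => ?_
    rw [hY]
    exact sq_nonneg _
  have hint_exp : Integrable (fun ω => Real.exp (-t * (∑ i, Y i) ω)) μ := by
    refine Integrable.mono' (integrable_const (1:ℝ))
      ((hXmeas.const_mul (-t)).exp.aestronglyMeasurable)
      (Filter.Eventually.of_forall fun ω => ?_)
    rw [Real.norm_eq_abs, abs_of_nonneg (Real.exp_nonneg _), Real.exp_le_one_iff]
    have := hXnonneg ω
    nlinarith
  -- Chernoff bound
  have hch := measure_le_le_exp_mul_mgf (μ := μ) (X := ∑ i, Y i) (↑n * σ ^ 2 / a)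
    (neg_nonpos.mpr htpos.le) hint_exp
  -- mgf of each Y i equals that of ξ₀^2
  have hmgf_i : ∀ i, mgf (Y i) μ (-t) = ∫ ω, Real.exp (-t * ξ₀ ω ^ 2) ∂μ := by
    intro i
    have hcomp : IdentDistrib (fun ω => Real.exp (-t * ξ i ω ^ 2))
        (fun ω => Real.exp (-t * ξ₀ ω ^ 2)) μ μ :=
      (hid i).comp (by measurability : Measurable fun x : ℝ => Real.exp (-t * x ^ 2))
    have := hcomp.integral_eq
    rw [mgf, hY]
    exact this
  -- bound the single mgf
  have hb1 : ∫ ω, Real.exp (-t * ξ₀ ω ^ 2) ∂μ ≤ 1 - t * σ ^ 2 + t ^ 2 * m4 / 2 := by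
    have hint_exp0 : Integrable (fun ω => Real.exp (-t * ξ₀ ω ^ 2)) μ := by
      refine Integrable.mono' (integrable_const (1:ℝ))
        (((hmeas₀.pow_const 2).const_mul (-t)).exp.aestronglyMeasurable)
        (Filter.Eventually.of_forall fun ω => ?_)
      rw [Real.norm_eq_abs, abs_of_nonneg (Real.exp_nonneg _), Real.exp_le_one_iff]
      nlinarith [sq_nonneg (ξ₀ ω)]
    have hintL1 : Integrable (fun ω => (1:ℝ) - t * ξ₀ ω ^ 2) μ := by
      exact (integrable_const (1:ℝ)).sub (hint2.const_mul t)
    have hintL3 : Integrable (fun ω => t ^ 2 * ξ₀ ω ^ 4 / 2) μ := by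
      exact (hint4.const_mul (t ^ 2)).div_const 2
    have hintR : Integrable (fun ω => 1 - t * ξ₀ ω ^ 2 + t ^ 2 * ξ₀ ω ^ 4 / 2) μ := by
      exact hintL1.add hintL3
    have hpt : ∀ ω, Real.exp (-t * ξ₀ ω ^ 2) ≤ 1 - t * ξ₀ ω ^ 2 + t ^ 2 * ξ₀ ω ^ 4 / 2 := by
      intro ω
      have h := exp_neg_le_quadratic (mul_nonneg htpos.le (sq_nonneg (ξ₀ ω)))
      rw [show -(t * ξ₀ ω ^ 2) = -t * ξ₀ ω ^ 2 by ring] at h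
      calc Real.exp (-t * ξ₀ ω ^ 2) ≤ 1 - t * ξ₀ ω ^ 2 + (t * ξ₀ ω ^ 2) ^ 2 / 2 := h
        _ = 1 - t * ξ₀ ω ^ 2 + t ^ 2 * ξ₀ ω ^ 4 / 2 := by ring
    have hle := integral_mono hint_exp0 hintR hpt
    rw [integral_add hintL1 hintL3,
      integral_sub (integrable_const (1:ℝ)) (hint2.const_mul t),
      integral_const, integral_const_mul, integral_div, integral_const_mul,
      ← hσ, ← hm4] at hle
    simp only [measure_univ, probReal_univ, ENNReal.toReal_one, smul_eq_mul, one_mul, mul_one] at hle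
    linarith
  -- single mgf ≤ exp(e1)
  obtain ⟨e1, he1⟩ : ∃ e1 : ℝ, e1 = -t * σ ^ 2 + t ^ 2 * K * σ ^ 4 / 2 := ⟨_, rfl⟩
  have hm4K : m4 ≤ K * σ ^ 4 := by
    rw [div_le_iff₀ hσ4pos] at hkurt
    exact hkurt
  have hb2 : ∫ ω, Real.exp (-t * ξ₀ ω ^ 2) ∂μ ≤ Real.exp e1 := by
    have h2 : 1 - t * σ ^ 2 + t ^ 2 * m4 / 2 ≤ e1 + 1 := by
      have : t ^ 2 * m4 ≤ t ^ 2 * (K * σ ^ 4) :=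
        mul_le_mul_of_nonneg_left hm4K (sq_nonneg t)
      rw [he1]; nlinarith
    exact le_trans hb1 (le_trans h2 (Real.add_one_le_exp e1))
  have hBnonneg : 0 ≤ ∫ ω, Real.exp (-t * ξ₀ ω ^ 2) ∂μ :=
    integral_nonneg fun ω => Real.exp_nonneg _
  -- mgf of the sum
  have hmgfX : mgf (∑ i, Y i) μ (-t) ≤ Real.exp (n * e1) := by
    rw [hYindep.mgf_sum hYmeas Finset.univ]
    calc ∏ i, mgf (Y i) μ (-t) = (∫ ω, Real.exp (-t * ξ₀ ω ^ 2) ∂μ) ^ n := by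
          rw [Finset.prod_congr rfl fun i _ => hmgf_i i, Finset.prod_const, Finset.card_univ,
            Fintype.card_fin]
      _ ≤ (Real.exp e1) ^ n := pow_le_pow_left₀ hBnonneg hb2 n
      _ = Real.exp (n * e1) := by rw [← Real.exp_nat_mul]
  -- put it together
  have hKne : K ≠ 0 := ne_of_gt hKpos
  have hσne : σ ≠ 0 := ne_of_gt hσpos
  have hane : a ≠ 0 := ne_of_gt (lt_trans one_pos ha)
  have hfinal : - -t * (↑n * σ ^ 2 / a) + ↑n * e1 = -(↑n * (1 - 1 / a) ^ 2) / (2 * K) := by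
    rw [he1, hts]
    exact alg_helper a K σ n hKne hσne hane
  have hset : {ω | ∑ i, ξ i ω ^ 2 ≤ ↑n * σ ^ 2 / a} = {ω | (∑ i, Y i) ω ≤ ↑n * σ ^ 2 / a} := by
    ext ω; rw [Set.mem_setOf_eq, Set.mem_setOf_eq, hXapp, hY]
  rw [hset]
  refine le_trans hch ?_
  calc Real.exp (- -t * (↑n * σ ^ 2 / a)) * mgf (∑ i, Y i) μ (-t)
      ≤ Real.exp (- -t * (↑n * σ ^ 2 / a)) * Real.exp (↑n * e1) :=
        mul_le_mul_of_nonneg_left hmgfX (Real.exp_nonneg _)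
    _ = Real.exp (- -t * (↑n * σ ^ 2 / a) + ↑n * e1) := (Real.exp_add _ _).symm
    _ = Real.exp (-(↑n * (1 - 1 / a) ^ 2) / (2 * K)) := by rw [hfinal]


/-- Self-normalized tail bound (oracle variance estimator `σ̂₀`): for i.i.d. centered
`ξᵢ` with kurtosis bounded by `K`, for every `x > 0` and `a > 1`,
`P(√n |ξ̄_n| > σ̂₀ x) ≤ 2(Φ(-x/√a) + min(Δ_E, Δ_B)) + exp(-n(1-1/a)²/(2K))`. -/
theorem stmt_13 {Ω : Type*} [MeasurableSpace Ω] (μ : Measure Ω) [IsProbabilityMeasure μ]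
    (n : ℕ) (hn : 1 ≤ n) (a K : ℝ) (ha : 1 < a)
    (ξ : Fin n → Ω → ℝ) (ξ₀ : Ω → ℝ)
    (hmeas : ∀ i, Measurable (ξ i)) (hmeas₀ : Measurable ξ₀)
    (hindep : iIndepFun ξ μ)
    (hid : ∀ i, IdentDistrib (ξ i) ξ₀ μ μ)
    (hint4 : Integrable (fun ω => ξ₀ ω ^ 4) μ)
    (hmean : ∫ ω, ξ₀ ω ∂μ = 0)
    (σ : ℝ) (hσpos : 0 < σ) (hσ : σ ^ 2 = ∫ ω, ξ₀ ω ^ 2 ∂μ)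
    (hkurt : (∫ ω, ξ₀ ω ^ 4 ∂μ) / σ ^ 4 ≤ K)
    (S : Ω → ℝ) (hS : S = fun ω => Real.sqrt n * ((∑ i, ξ i ω) / n) / σ)
    (lam3 ΔB ΔE : ℝ)
    (hlam3 : lam3 = (∫ ω, ξ₀ ω ^ 3 ∂μ) / σ ^ 3)
    (hΔB : ΔB = ⨆ x : ℝ, |(μ {ω | S ω ≤ x}).toReal - Phi x|)
    (hΔE : ΔE = ⨆ x : ℝ,
      |(μ {ω | S ω ≤ x}).toReal - Phi x - lam3 / (6 * Real.sqrt n) * (1 - x ^ 2) * gpdf x|) :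
    ∀ x : ℝ, 0 < x →
      (μ {ω | Real.sqrt ((∑ i, ξ i ω ^ 2) / n) * x < Real.sqrt n * |(∑ i, ξ i ω) / n|}).toReal
        ≤ 2 * (Phi (-(x / Real.sqrt a)) + min ΔE ΔB)
          + Real.exp (-(n * (1 - 1 / a) ^ 2) / (2 * K)) := by
  intro x hx
  have hapos : 0 < a := lt_trans one_pos ha
  have hsa : 0 < Real.sqrt a := Real.sqrt_pos.mpr hapos
  set y : ℝ := x / Real.sqrt a with hy
  have hypos : 0 < y := div_pos hx hsa
  have hnpos : (0:ℝ) < (n:ℝ) := by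
    have : (1:ℝ) ≤ (n:ℝ) := by exact_mod_cast hn
    linarith
  -- measurability of S
  have hSmeas : Measurable S := by
    rw [hS]
    exact (((Finset.measurable_sum Finset.univ fun i _ => hmeas i).div_const
      (n:ℝ)).const_mul (Real.sqrt n)).div_const σ
  -- the c.d.f. of S
  have hF01 : ∀ z : ℝ, 0 ≤ (μ {ω | S ω ≤ z}).toReal ∧ (μ {ω | S ω ≤ z}).toReal ≤ 1 := by
    intro z
    constructor
    · exact ENNReal.toReal_nonneg
    · calc (μ {ω | S ω ≤ z}).toReal ≤ (1 : ENNReal).toReal :=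
            ENNReal.toReal_mono ENNReal.one_ne_top prob_le_one
        _ = 1 := by simp
  -- uniform bounds from the suprema
  have hBa : ∀ z : ℝ, |(μ {ω | S ω ≤ z}).toReal - Phi z| ≤ ΔB := by
    intro z
    rw [hΔB]
    refine le_ciSup (f := fun z : ℝ => |(μ {ω | S ω ≤ z}).toReal - Phi z|) ⟨2, ?_⟩ z
    rintro r ⟨w, rfl⟩
    have h1 := hF01 w
    have h2 := Phi_nonneg w
    have h3 := Phi_le_one w
    rw [abs_le]
    constructor <;> linarith [h1.1, h1.2]
  have hEa : ∀ z : ℝ, |(μ {ω | S ω ≤ z}).toReal - Phi z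
      - lam3 / (6 * Real.sqrt n) * (1 - z ^ 2) * gpdf z| ≤ ΔE := by
    intro z
    rw [hΔE]
    refine le_ciSup (f := fun z : ℝ => |(μ {ω | S ω ≤ z}).toReal - Phi z
      - lam3 / (6 * Real.sqrt n) * (1 - z ^ 2) * gpdf z|) ⟨2 + |lam3 / (6 * Real.sqrt n)| * 3, ?_⟩ z
    rintro r ⟨w, rfl⟩
    have h1 := hF01 w
    have h2 := Phi_nonneg w
    have h3 := Phi_le_one w
    have h4 : |lam3 / (6 * Real.sqrt n) * (1 - w ^ 2) * gpdf w|
        ≤ |lam3 / (6 * Real.sqrt n)| * 3 := by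
      rw [mul_assoc, abs_mul]
      exact mul_le_mul_of_nonneg_left (abs_edgeworth_term_le w) (abs_nonneg _)
    have h5 := neg_abs_le (lam3 / (6 * Real.sqrt n) * (1 - w ^ 2) * gpdf w)
    have h6 := le_abs_self (lam3 / (6 * Real.sqrt n) * (1 - w ^ 2) * gpdf w)
    rw [abs_le]
    constructor <;> linarith [h1.1, h1.2]
  -- complement computation
  have hcompl : ∀ c : ℝ, (μ {ω | c < S ω}).toReal = 1 - (μ {ω | S ω ≤ c}).toReal := by
    intro c
    have hm1 : MeasurableSet {ω | S ω ≤ c} := hSmeas measurableSet_Iic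
    have hset : {ω | c < S ω} = {ω | S ω ≤ c}ᶜ := by
      ext ω; simp [not_le]
    rw [hset, prob_compl_eq_one_sub hm1,
      ENNReal.toReal_sub_of_le prob_le_one ENNReal.one_ne_top, ENNReal.toReal_one]
  -- generic two-sided tail bound
  have key : ∀ T : ℝ → ℝ, T (-y) = T y → ∀ Δ : ℝ,
      (∀ z : ℝ, |(μ {ω | S ω ≤ z}).toReal - Phi z - T z| ≤ Δ) →
      (μ {ω | y < |S ω|}).toReal ≤ 2 * (Phi (-y) + Δ) := by
    intro T hTsym Δ hΔ
    have hsub : {ω | y < |S ω|} ⊆ {ω | y < S ω} ∪ {ω | S ω ≤ -y} := by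
      intro ω hω
      rw [Set.mem_setOf_eq, lt_abs] at hω
      rcases hω with h | h
      · exact Or.inl h
      · exact Or.inr (le_of_lt (lt_neg.mp h))
    have hmono : (μ {ω | y < |S ω|}).toReal
        ≤ (μ {ω | y < S ω}).toReal + (μ {ω | S ω ≤ -y}).toReal := by
      calc (μ {ω | y < |S ω|}).toReal
          ≤ (μ {ω | y < S ω} + μ {ω | S ω ≤ -y}).toReal := by
            apply ENNReal.toReal_mono
            · exact ENNReal.add_ne_top.mpr ⟨measure_ne_top _ _, measure_ne_top _ _⟩
            · exact le_trans (measure_mono hsub) (measure_union_le _ _)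
        _ = (μ {ω | y < S ω}).toReal + (μ {ω | S ω ≤ -y}).toReal :=
            ENNReal.toReal_add (measure_ne_top _ _) (measure_ne_top _ _)
    have h1 := hΔ y
    have h2 := hΔ (-y)
    rw [abs_le] at h1 h2
    have hPneg : Phi (-y) = 1 - Phi y := Phi_neg y
    rw [hcompl y] at hmono
    rw [hTsym] at h2
    linarith [h1.1, h1.2, h2.1, h2.2, hmono]
  -- apply with the Edgeworth correction and with zero correction
  have keyE : (μ {ω | y < |S ω|}).toReal ≤ 2 * (Phi (-y) + ΔE) := by
    refine key (fun z => lam3 / (6 * Real.sqrt n) * (1 - z ^ 2) * gpdf z) ?_ ΔE hEa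
    simp only [neg_sq, gpdf_even]
  have keyB : (μ {ω | y < |S ω|}).toReal ≤ 2 * (Phi (-y) + ΔB) := by
    refine key (fun _ => 0) rfl ΔB ?_
    intro z
    have := hBa z
    simpa using this
  have keymin : (μ {ω | y < |S ω|}).toReal ≤ 2 * (Phi (-y) + min ΔE ΔB) := by
    rcases le_total ΔE ΔB with h | h
    · rwa [min_eq_left h]
    · rwa [min_eq_right h]
  -- event inclusion
  have hsub2 : {ω | Real.sqrt ((∑ i, ξ i ω ^ 2) / n) * x < Real.sqrt n * |(∑ i, ξ i ω) / n|}
      ⊆ {ω | y < |S ω|} ∪ {ω | ∑ i, ξ i ω ^ 2 ≤ ↑n * σ ^ 2 / a} := by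
    intro ω hω
    rw [Set.mem_setOf_eq] at hω
    by_cases hA : ∑ i, ξ i ω ^ 2 ≤ ↑n * σ ^ 2 / a
    · exact Or.inr hA
    · left
      push_neg at hA
      have h1 : σ ^ 2 / a < (∑ i, ξ i ω ^ 2) / n := by
        rw [lt_div_iff₀ hnpos]
        calc σ ^ 2 / a * ↑n = ↑n * σ ^ 2 / a := by ring
          _ < ∑ i, ξ i ω ^ 2 := hA
      have h2 : σ / Real.sqrt a ≤ Real.sqrt ((∑ i, ξ i ω ^ 2) / n) := by
        rw [show σ / Real.sqrt a = Real.sqrt (σ ^ 2 / a) by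
          rw [Real.sqrt_div (sq_nonneg σ), Real.sqrt_sq hσpos.le]]
        exact Real.sqrt_le_sqrt h1.le
      have h3 : σ / Real.sqrt a * x < Real.sqrt n * |(∑ i, ξ i ω) / n| :=
        lt_of_le_of_lt (mul_le_mul_of_nonneg_right h2 hx.le) hω
      have hSabs : |S ω| = Real.sqrt n * |(∑ i, ξ i ω) / n| / σ := by
        rw [hS]
        rw [abs_div, abs_mul, abs_of_nonneg (Real.sqrt_nonneg _), abs_of_pos hσpos]
      rw [Set.mem_setOf_eq, hSabs, lt_div_iff₀ hσpos]
      calc y * σ = σ / Real.sqrt a * x := by rw [hy]; ring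
        _ < Real.sqrt n * |(∑ i, ξ i ω) / n| := h3
  -- union bound and conclusion
  have hunion : (μ {ω | Real.sqrt ((∑ i, ξ i ω ^ 2) / n) * x
        < Real.sqrt n * |(∑ i, ξ i ω) / n|}).toReal
      ≤ (μ {ω | y < |S ω|}).toReal + (μ {ω | ∑ i, ξ i ω ^ 2 ≤ ↑n * σ ^ 2 / a}).toReal := by
    calc (μ {ω | Real.sqrt ((∑ i, ξ i ω ^ 2) / n) * x
          < Real.sqrt n * |(∑ i, ξ i ω) / n|}).toReal
        ≤ (μ {ω | y < |S ω|} + μ {ω | ∑ i, ξ i ω ^ 2 ≤ ↑n * σ ^ 2 / a}).toReal := by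
          apply ENNReal.toReal_mono
          · exact ENNReal.add_ne_top.mpr ⟨measure_ne_top _ _, measure_ne_top _ _⟩
          · exact le_trans (measure_mono hsub2) (measure_union_le _ _)
      _ = (μ {ω | y < |S ω|}).toReal
          + (μ {ω | ∑ i, ξ i ω ^ 2 ≤ ↑n * σ ^ 2 / a}).toReal :=
          ENNReal.toReal_add (measure_ne_top _ _) (measure_ne_top _ _)
  have hchern := chernoff_lower μ n a K σ ha hσpos ξ ξ₀ hmeas hmeas₀ hindep hid hint4 hσ hkurt
  calc (μ {ω | Real.sqrt ((∑ i, ξ i ω ^ 2) / n) * x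
        < Real.sqrt n * |(∑ i, ξ i ω) / n|}).toReal
      ≤ (μ {ω | y < |S ω|}).toReal
        + (μ {ω | ∑ i, ξ i ω ^ 2 ≤ ↑n * σ ^ 2 / a}).toReal := hunion
    _ ≤ 2 * (Phi (-y) + min ΔE ΔB) + Real.exp (-(↑n * (1 - 1 / a) ^ 2) / (2 * K)) :=
        add_le_add keymin hchern
end
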